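/- Let K be a compact linearly ordered topological space, let G and H be disjoint closed subsets of K, and let 𝒞 be a pairwise disjoint family of convex subsets of K. Then only finitely many members C ∈ 𝒞 satisfy both C ∩ G ≠ ∅ and C ∩ H ≠ ∅. (In particular, every pairwise disjoint family of convex subsets of a compact LOTS is a null family.) -/
import Mathlib


universe u

open Set Topology

/-- The character of a space `X` at a point `x`: the least cardinality of a
neighborhood base of `X` at `x`. -/
noncomputable def nhdsChar (X : Type u) [TopologicalSpace X] (x : X) : Cardinal.{u} :=
  sInf { c | ∃ B : Set (Set X), Cardinal.mk B = c ∧ (∀ U ∈ B, U ∈ nhds x) ∧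
      ∀ V ∈ nhds x, ∃ U ∈ B, U ⊆ V }

/-- The character of a space: `χ(X) = sup_{x ∈ X} χ(x, X)`. -/
noncomputable def spaceChar (X : Type u) [TopologicalSpace X] : Cardinal.{u} :=
  ⨆ x : X, nhdsChar X x

/-- The cellularity of a space: the supremum of cardinalities of pairwise disjoint
families of nonempty open subsets. -/
noncomputable def cellularity (X : Type u) [TopologicalSpace X] : Cardinal.{u} :=
  sSup { c | ∃ 𝒰 : Set (Set X), Cardinal.mk 𝒰 = c ∧ (∀ U ∈ 𝒰, IsOpen U ∧ U.Nonempty) ∧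
      𝒰.PairwiseDisjoint id }

/-- The density of a space: the least cardinality of a dense subset. -/
noncomputable def density (X : Type u) [TopologicalSpace X] : Cardinal.{u} :=
  sInf { c | ∃ D : Set X, Cardinal.mk D = c ∧ Dense D }

/-- The weight of a space: the least cardinality of a base for the topology. -/
noncomputable def weight (X : Type u) [TopologicalSpace X] : Cardinal.{u} :=
  sInf { c | ∃ B : Set (Set X), Cardinal.mk B = c ∧ TopologicalSpace.IsTopologicalBasis B }

/-- A surjective map is irreducible if no proper closed subset maps onto the codomain. -/
def IsIrreducibleMap {K : Type*} {X : Type*} [TopologicalSpace K] [TopologicalSpace X]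
    (f : K → X) : Prop :=
  Function.Surjective f ∧ ∀ A : Set K, IsClosed A → A ≠ univ → f '' A ≠ univ

/-- `C` is an order component of `A`: a maximal convex subset of `A`. -/
def IsOrderComponent {K : Type*} [LinearOrder K] (A C : Set K) : Prop :=
  C ⊆ A ∧ C.OrdConnected ∧ ∀ C' : Set K, C ⊆ C' → C' ⊆ A → C'.OrdConnected → C' = C

/-- A map from a linearly ordered set is order-light if every order component of every
fiber is a singleton. -/
def OrderLight {K : Type*} {X : Type*} [LinearOrder K] (f : K → X) : Prop :=
  ∀ x : X, ∀ C : Set K, IsOrderComponent (f ⁻¹' {x}) C → ∃ k, C = {k}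

/-- The countable chain condition: every pairwise disjoint family of nonempty open sets
is countable. -/
def CCC (X : Type*) [TopologicalSpace X] : Prop :=
  ∀ 𝒰 : Set (Set X), (∀ U ∈ 𝒰, IsOpen U ∧ U.Nonempty) → 𝒰.PairwiseDisjoint id → 𝒰.Countable

/-- A space is non-archimedean if it has a base any two members of which are either
disjoint or comparable by inclusion. -/
def NonArchimedean (X : Type*) [TopologicalSpace X] : Prop :=
  ∃ B : Set (Set X), TopologicalSpace.IsTopologicalBasis B ∧
    ∀ U ∈ B, ∀ V ∈ B, Disjoint U V ∨ U ⊆ V ∨ V ⊆ U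

/-- A space is perfectly normal if it is normal and every closed set is a Gδ-set. -/
def PerfNormal (X : Type*) [TopologicalSpace X] : Prop :=
  NormalSpace X ∧ ∀ A : Set X, IsClosed A → IsGδ A

/-- `X` is a continuous image of some compact linearly ordered topological space
(a linearly ordered set equipped with its order topology). -/
def ContinuousImageOfCompactLOTS (X : Type u) [TopologicalSpace X] : Prop :=
  ∃ (K : Type u) (lo : LinearOrder K) (tK : TopologicalSpace K),
    letI := lo; letI := tK;
    OrderTopology K ∧ CompactSpace K ∧ ∃ f : K → X, Continuous f ∧ Function.Surjective f

/-- A closed set `A` is a strong T-set: the boundary of each connected component of the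
complement consists of exactly two points, and each such component is homeomorphic to the
open unit interval `(0,1)`. -/
def IsStrongTSet {Y : Type*} [TopologicalSpace Y] (A : Set Y) : Prop :=
  IsClosed A ∧ ∀ x ∈ Aᶜ,
    (∃ a b : Y, a ≠ b ∧ frontier (connectedComponentIn Aᶜ x) = {a, b}) ∧
    Nonempty (↥(connectedComponentIn Aᶜ x) ≃ₜ ↥(Ioo (0:ℝ) 1))

/-- Souslin's Hypothesis: every ccc LOTS is separable. -/
def SouslinHypothesis : Prop :=
  ∀ (L : Type u) (lo : LinearOrder L) (tL : TopologicalSpace L),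
    letI := lo; letI := tL;
    OrderTopology L → CCC L → TopologicalSpace.SeparableSpace L

theorem convex_family_null (K : Type u) [LinearOrder K] [TopologicalSpace K]
    [OrderTopology K] [CompactSpace K] (G H : Set K) (hG : IsClosed G) (hH : IsClosed H)
    (hGH : Disjoint G H) (𝒞 : Set (Set K)) (hconv : ∀ C ∈ 𝒞, C.OrdConnected)
    (hdisj : 𝒞.PairwiseDisjoint id) :
    {C ∈ 𝒞 | (C ∩ G).Nonempty ∧ (C ∩ H).Nonempty}.Finite := by
  by_contra hfin
  have hinf : {C ∈ 𝒞 | (C ∩ G).Nonempty ∧ (C ∩ H).Nonempty}.Infinite := hfin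
  set e := hinf.natEmbedding with he
  set C : ℕ → Set K := fun n => (e n : Set K) with hC
  have hC𝒞 : ∀ n, C n ∈ 𝒞 := fun n => (e n).2.1
  have hCne : ∀ {n m : ℕ}, n ≠ m → C n ≠ C m := by
    intro n m hnm hc
    exact hnm (e.injective (Subtype.ext hc))
  have hCdisj : ∀ {n m : ℕ}, n ≠ m → Disjoint (C n) (C m) := fun {n m} hnm =>
    hdisj (hC𝒞 n) (hC𝒞 m) (hCne hnm)
  have hgex : ∀ n, ∃ p, p ∈ C n ∧ p ∈ G := fun n => (e n).2.2.1
  have hkex : ∀ n, ∃ p, p ∈ C n ∧ p ∈ H := fun n => (e n).2.2.2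
  choose g hgC hgG using hgex
  choose k hkC hkH using hkex
  set a : ℕ → K := fun n => g n ⊓ k n with ha
  set b : ℕ → K := fun n => g n ⊔ k n with hb
  set J : ℕ → Set K := fun n => Icc (a n) (b n) with hJ
  have hJu : ∀ n, J n = uIcc (g n) (k n) := fun n => rfl
  have hJsub : ∀ n, J n ⊆ C n := fun n => by
    rw [hJu]; exact (hconv _ (hC𝒞 n)).uIcc_subset (hgC n) (hkC n)
  have hgJ : ∀ n, g n ∈ J n := fun n => by rw [hJu]; exact left_mem_uIcc
  have hkJ : ∀ n, k n ∈ J n := fun n => by rw [hJu]; exact right_mem_uIcc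
  have hab : ∀ n, a n ≤ b n := fun n => inf_le_sup
  have hJdisj : ∀ {n m : ℕ}, n ≠ m → Disjoint (J n) (J m) := fun {n m} hnm =>
    (hCdisj hnm).mono (hJsub n) (hJsub m)
  -- the intervals are linearly ordered
  have tot : ∀ {n m : ℕ}, n ≠ m → b n < a m ∨ b m < a n := by
    intro n m hnm
    by_contra hcon
    push_neg at hcon
    have hx : a n ⊔ a m ∈ J n := ⟨le_sup_left, sup_le (hab n) hcon.1⟩
    have hy : a n ⊔ a m ∈ J m := ⟨le_sup_right, sup_le hcon.2 (hab m)⟩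
    exact Set.disjoint_left.mp (hJdisj hnm) hx hy
  have tr : ∀ {n m l : ℕ}, b n < a m → b m < a l → b n < a l := fun h1 h2 =>
    lt_of_lt_of_le h1 (le_of_lt (lt_of_le_of_lt (hab _) h2))
  -- a middle interval among any three
  have mid : ∀ n1 n2 n3 : ℕ, n1 ≠ n2 → n1 ≠ n3 → n2 ≠ n3 →
      ∃ p q r : ℕ, p ∈ ({n1, n2, n3} : Set ℕ) ∧ q ∈ ({n1, n2, n3} : Set ℕ) ∧
        r ∈ ({n1, n2, n3} : Set ℕ) ∧ b p < a q ∧ b q < a r := by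
    intro n1 n2 n3 h12 h13 h23
    have m1 : n1 ∈ ({n1, n2, n3} : Set ℕ) := by simp
    have m2 : n2 ∈ ({n1, n2, n3} : Set ℕ) := by simp
    have m3 : n3 ∈ ({n1, n2, n3} : Set ℕ) := by simp
    rcases tot h12 with h | h
    · rcases tot h23 with h' | h'
      · exact ⟨n1, n2, n3, m1, m2, m3, h, h'⟩
      · rcases tot h13 with h'' | h''
        · exact ⟨n1, n3, n2, m1, m3, m2, h'', h'⟩
        · exact ⟨n3, n1, n2, m3, m1, m2, h'', h⟩
    · rcases tot h13 with h'' | h''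
      · exact ⟨n2, n1, n3, m2, m1, m3, h, h''⟩
      · rcases tot h23 with h' | h'
        · exact ⟨n2, n3, n1, m2, m3, m1, h', h''⟩
        · exact ⟨n3, n2, n1, m3, m2, m1, h', h⟩
  -- a cluster point of the sequence of points of G
  haveI : (Filter.map g Filter.atTop).NeBot := Filter.atTop_neBot.map g
  obtain ⟨x, hx⟩ := exists_clusterPt_of_compactSpace (Filter.map g Filter.atTop)
  have hxG : x ∈ G := by
    have h1 : Filter.map g Filter.atTop ≤ Filter.principal G :=
      Filter.le_principal_iff.mpr (Filter.mem_map.mpr (Filter.univ_mem' fun n => hgG n))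
    have h2 : ClusterPt x (Filter.principal G) := hx.mono h1
    have := mem_closure_iff_clusterPt.mpr h2
    rwa [hG.closure_eq] at this
  -- a basis of ord-connected sets
  have hbasis := TopologicalSpace.isTopologicalBasis_of_subbasis
    (OrderTopology.topology_eq_generate_intervals (α := K))
  have hbconv : ∀ V ∈ ((fun f : Set (Set K) => ⋂₀ f) ''
      { f : Set (Set K) | f.Finite ∧ f ⊆ { s | ∃ c, s = Ioi c ∨ s = Iio c } }),
      V.OrdConnected := by
    rintro _ ⟨f, ⟨-, hsub⟩, rfl⟩
    refine Set.ordConnected_sInter fun s hs => ?_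
    obtain ⟨c, rfl | rfl⟩ := hsub hs
    · exact Set.ordConnected_Ioi
    · exact Set.ordConnected_Iio
  have hxH : x ∈ H := by
    rw [← hH.closure_eq, mem_closure_iff_nhds]
    intro U hU
    obtain ⟨V, hVb, hxV, hVU⟩ := hbasis.mem_nhds_iff.mp hU
    have hVconv : V.OrdConnected := hbconv V hVb
    have hVnhds : V ∈ nhds x := hbasis.mem_nhds hVb hxV
    have hfreq : {n | g n ∈ V}.Infinite := by
      have h1 : ∃ᶠ y in Filter.map g Filter.atTop, y ∈ V :=
        ((Filter.basis_sets (nhds x)).clusterPt_iff_frequently.mp hx) V hVnhds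
      exact Nat.frequently_atTop_iff_infinite.mp (Filter.frequently_map.mp h1)
    by_cases hex : ∃ n, g n ∈ V ∧ J n ⊆ V
    · obtain ⟨n, -, hsub⟩ := hex
      exact ⟨k n, hVU (hsub (hkJ n)), hkH n⟩
    · push_neg at hex
      obtain ⟨n1, hn1⟩ := hfreq.nonempty
      obtain ⟨n2, hn2⟩ := (hfreq.diff (Set.finite_singleton n1)).nonempty
      obtain ⟨n3, hn3⟩ := (hfreq.diff ((Set.finite_singleton n1).insert n2)).nonempty
      have h12 : n1 ≠ n2 := fun h => hn2.2 (by simp [h.symm])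
      have h13 : n1 ≠ n3 := fun h => hn3.2 (by simp [h.symm])
      have h23 : n2 ≠ n3 := fun h => hn3.2 (by simp [h.symm])
      obtain ⟨p, q, r, hp, hq, hr, hpq, hqr⟩ := mid n1 n2 n3 h12 h13 h23
      have hmemV : ∀ m ∈ ({n1, n2, n3} : Set ℕ), g m ∈ V := by
        rintro m (rfl | rfl | rfl)
        exacts [hn1, hn2.1, hn3.1]
      obtain ⟨y, hyJ, hyV⟩ := Set.not_subset.mp (hex q (hmemV q hq))
      exact absurd (hVconv.out (hmemV p hp) (hmemV r hr)
        ⟨le_trans le_sup_left (le_trans hpq.le hyJ.1),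
         le_trans hyJ.2 (le_trans hqr.le inf_le_left)⟩) hyV
  exact Set.disjoint_left.mp hGH hxG hxH
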